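/- arXiv:1303.2707 — 2 statements merged into one kernel-verified Lean document; each statement's English description precedes it below -/
import Mathlib

section
/- Let G be a finite subgroup of the orthogonal group O(n) acting on ℝⁿ. For x, y ∈ ℝⁿ, y lies in the convex hull of the orbit {g·x : g ∈ G} if and only if sup_{g∈G} ⟨z, g·y⟩ ≤ sup_{g∈G} ⟨z, g·x⟩ for all z ∈ ℝⁿ. -/
open Matrix

theorem stmt_1 (n : ℕ) (G : Subgroup (Matrix.orthogonalGroup (Fin n) ℝ))
    (hG : (G : Set (Matrix.orthogonalGroup (Fin n) ℝ)).Finite) (x y : Fin n → ℝ) :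
    y ∈ convexHull ℝ {v | ∃ g ∈ G, (g : Matrix (Fin n) (Fin n) ℝ).mulVec x = v} ↔
      ∀ z : Fin n → ℝ,
        (⨆ g : G, z ⬝ᵥ (g.1 : Matrix (Fin n) (Fin n) ℝ).mulVec y) ≤
          ⨆ g : G, z ⬝ᵥ (g.1 : Matrix (Fin n) (Fin n) ℝ).mulVec x := by
  haveI : Finite G := hG.to_subtype
  haveI : Nonempty G := ⟨1⟩
  have hSrange : {v | ∃ g ∈ G, (g : Matrix (Fin n) (Fin n) ℝ).mulVec x = v} =
      Set.range (fun g : G => (g.1 : Matrix (Fin n) (Fin n) ℝ).mulVec x) := by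
    ext v
    constructor
    · rintro ⟨g, hg, rfl⟩; exact ⟨⟨g, hg⟩, rfl⟩
    · rintro ⟨g, rfl⟩; exact ⟨g.1, g.2, rfl⟩
  have hbddx : ∀ z : Fin n → ℝ, BddAbove (Set.range fun g : G =>
      z ⬝ᵥ (g.1 : Matrix (Fin n) (Fin n) ℝ).mulVec x) :=
    fun z => (Set.finite_range _).bddAbove
  have hbddy : ∀ z : Fin n → ℝ, BddAbove (Set.range fun g : G =>
      z ⬝ᵥ (g.1 : Matrix (Fin n) (Fin n) ℝ).mulVec y) :=
    fun z => (Set.finite_range _).bddAbove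
  constructor
  · intro hy z
    apply ciSup_le
    intro g
    have hlin : IsLinearMap ℝ (fun v : Fin n → ℝ =>
        z ⬝ᵥ (g.1 : Matrix (Fin n) (Fin n) ℝ).mulVec v) := by
      constructor
      · intro a b; simp [mulVec_add, dotProduct_add]
      · intro c a; simp [mulVec_smul, dotProduct_smul]
    have key : y ∈ {v : Fin n → ℝ | z ⬝ᵥ (g.1 : Matrix (Fin n) (Fin n) ℝ).mulVec v ≤
        ⨆ g : G, z ⬝ᵥ (g.1 : Matrix (Fin n) (Fin n) ℝ).mulVec x} := by
      refine convexHull_min ?_ (convex_halfSpace_le hlin _) hy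
      rintro v ⟨g₀, hg₀, rfl⟩
      have heq : z ⬝ᵥ (g.1 : Matrix (Fin n) (Fin n) ℝ).mulVec
          ((g₀ : Matrix (Fin n) (Fin n) ℝ).mulVec x) =
          z ⬝ᵥ (((g.1 * g₀ : orthogonalGroup (Fin n) ℝ) : Matrix (Fin n) (Fin n) ℝ)).mulVec x := by
        rw [mulVec_mulVec]
        rfl
      rw [Set.mem_setOf_eq, heq]
      exact le_ciSup (hbddx z) ⟨g.1 * g₀, mul_mem g.2 hg₀⟩
    exact key
  · intro h
    by_contra hy
    have hSfin : ({v | ∃ g ∈ G, (g : Matrix (Fin n) (Fin n) ℝ).mulVec x = v}).Finite := by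
      rw [hSrange]; exact Set.finite_range _
    have hclosed : IsClosed (convexHull ℝ {v | ∃ g ∈ G,
        (g : Matrix (Fin n) (Fin n) ℝ).mulVec x = v}) :=
      (hSfin.isCompact_convexHull (𝕜 := ℝ)).isClosed
    obtain ⟨f, u, hfs, hfy⟩ :=
      geometric_hahn_banach_closed_point (convex_convexHull ℝ _) hclosed hy
    set z : Fin n → ℝ := fun i => f (fun j => if i = j then 1 else 0) with hz
    have hfz : ∀ v : Fin n → ℝ, f v = z ⬝ᵥ v := by
      intro v
      rw [show f v = (f : (Fin n → ℝ) →ₗ[ℝ] ℝ) v from rfl,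
        LinearMap.pi_apply_eq_sum_univ]
      simp [dotProduct, hz, mul_comm]
    have h1 : z ⬝ᵥ y ≤ ⨆ g : G, z ⬝ᵥ (g.1 : Matrix (Fin n) (Fin n) ℝ).mulVec y := by
      have := le_ciSup (hbddy z) (⟨1, one_mem G⟩ : G)
      simpa using this
    have h2 : (⨆ g : G, z ⬝ᵥ (g.1 : Matrix (Fin n) (Fin n) ℝ).mulVec x) ≤ u := by
      apply ciSup_le
      intro g
      have hmem : (g.1 : Matrix (Fin n) (Fin n) ℝ).mulVec x ∈ convexHull ℝ
          {v | ∃ g ∈ G, (g : Matrix (Fin n) (Fin n) ℝ).mulVec x = v} :=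
        subset_convexHull ℝ _ ⟨g.1, g.2, rfl⟩
      have := hfs _ hmem
      rw [hfz] at this
      exact this.le
    have h3 : u < z ⬝ᵥ y := by rw [← hfz]; exact hfy
    have := h z
    linarith
end

section
/- Let n = 4 and f(x) = (1/4)(x₁²+x₂²+x₃²+x₄²)² − |x₁x₂x₃x₄|. Then for all x in the cone {x : x₁ ≥ x₂ ≥ x₃ ≥ x₄, x₃+x₄ ≥ 0} with all coordinates making the product positive region (so that |x₁x₂x₃x₄| = x₁x₂x₃x₄ on this cone), one has (x₃+x₄)(x₁²+x₂²+x₃²+x₄² − x₁x₂) ≥ 0; but at x = (1,1,1,1/4), the derivative ∂f/∂x₄ = (x₁²+x₂²+x₃²+x₄²)x₄ − x₁x₂x₃ is negative. -/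
theorem stmt_15 :
    (∀ x1 x2 x3 x4 : ℝ, x1 ≥ x2 → x2 ≥ x3 → x3 ≥ x4 → x3 + x4 ≥ 0 →
        (x3 + x4) * (x1 ^ 2 + x2 ^ 2 + x3 ^ 2 + x4 ^ 2 - x1 * x2) ≥ 0) ∧
      ((1 ^ 2 + 1 ^ 2 + 1 ^ 2 + ((1 : ℝ) / 4) ^ 2) * (1 / 4) - 1 * 1 * 1 < 0) := by
  constructor
  · intro x1 x2 x3 x4 h12 h23 h34 h
    have : x1 ^ 2 + x2 ^ 2 + x3 ^ 2 + x4 ^ 2 - x1 * x2 ≥ 0 := by nlinarith [sq_nonneg (x1 - x2), sq_nonneg x3, sq_nonneg x4]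
    positivity
  · norm_num
end
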